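/- Let H = (V, E) be a hypergraph, x̄ ∈ ℝ^E with x̄ ≥ 0, and β ∈ ℝ. Let Φ = {S_1, …, S_p} be a partition of V into nonempty parts minimizing x̄(δ(𝒫)) − β(|𝒫| − 1) over all partitions 𝒫 of V into nonempty parts. Then for every nonempty subfamily {S_{i_1}, …, S_{i_l}} of Φ, x̄(δ(S_{i_1}, …, S_{i_l})) − β(l − 1) ≤ 0. -/

import Mathlib

open Finset

variable {V α : Type*}

/-- `F[X]`: the subfamily of hyperedges of `F` contained in `X`. -/
def restrict [DecidableEq V] (edge : α → Finset V) (F : Finset α) (X : Finset V) : Finset α :=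
  F.filter fun e => edge e ⊆ X

/-- `F` is a hyperforest of the hypergraph `(V, E)` (with hyperedges given by `edge`). -/
def IsHyperforest [DecidableEq V] (edge : α → Finset V) (E F : Finset α) : Prop :=
  F ⊆ E ∧ ∀ X : Finset V, X.Nonempty → (restrict edge F X).card ≤ X.card - 1

/-- `F` is a hypertree: a hyperforest with `|V| - 1` hyperedges. -/
def IsHypertree [Fintype V] [DecidableEq V] (edge : α → Finset V) (E F : Finset α) : Prop :=
  IsHyperforest edge E F ∧ F.card = Fintype.card V - 1

/-- `Ps` is a family of pairwise disjoint nonempty sets whose union is `S`. -/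
def IsPartitionOf [DecidableEq V] (Ps : Finset (Finset V)) (S : Finset V) : Prop :=
  (∀ P ∈ Ps, P.Nonempty) ∧ (∀ P ∈ Ps, ∀ Q ∈ Ps, P ≠ Q → Disjoint P Q) ∧ Ps.sup id = S

/-- `Ps` is a partition of the vertex set `V` into nonempty parts. -/
def IsPartition [Fintype V] [DecidableEq V] (Ps : Finset (Finset V)) : Prop :=
  IsPartitionOf Ps Finset.univ

/-- `δ_F(Ps)`: hyperedges of `F` contained in the union of the members of `Ps`
and intersecting at least two members of `Ps`. -/
def delta [DecidableEq V] (edge : α → Finset V) (F : Finset α) (Ps : Finset (Finset V)) :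
    Finset α :=
  F.filter fun e => edge e ⊆ Ps.sup id ∧
    2 ≤ (Ps.filter fun P => (edge e ∩ P).Nonempty).card

/-- Lemma 2: if `Φ` minimizes `x̄(δ(Ps)) - β(|Ps| - 1)` over partitions of `V`,
then for every nonempty subfamily `Φ' ⊆ Φ`, `x̄(δ(Φ')) - β(|Φ'| - 1) ≤ 0`. -/
theorem optimal_partition_subfamily [Fintype V] [DecidableEq V] [DecidableEq α]
    (edge : α → Finset V) (E : Finset α)
    (hV : 1 ≤ Fintype.card V) (hE : ∀ e ∈ E, 2 ≤ (edge e).card)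
    (x : α → ℝ) (hx : ∀ e ∈ E, 0 ≤ x e) (β : ℝ)
    (Φ : Finset (Finset V)) (hΦ : IsPartition Φ)
    (hmin : ∀ Ps : Finset (Finset V), IsPartition Ps →
      (∑ e ∈ delta edge E Φ, x e) - β * ((Φ.card : ℝ) - 1) ≤
        (∑ e ∈ delta edge E Ps, x e) - β * ((Ps.card : ℝ) - 1))
    (Φ' : Finset (Finset V)) (hsub : Φ' ⊆ Φ) (hne : Φ'.Nonempty) :
    (∑ e ∈ delta edge E Φ', x e) - β * ((Φ'.card : ℝ) - 1) ≤ 0 := by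
  classical
  obtain ⟨hne1, hdisj, hsup⟩ := hΦ
  set T : Finset V := Φ'.sup id with hT
  set Ψ : Finset (Finset V) := (Φ \ Φ') ∪ {T} with hΨ
  obtain ⟨Q0, hQ0⟩ := hne
  have hTne : T.Nonempty := (hne1 Q0 (hsub hQ0)).mono (Finset.le_sup (f := id) hQ0)
  have hdisjT : ∀ P ∈ Φ, P ∉ Φ' → Disjoint P T := by
    intro P hP hP'
    refine Finset.disjoint_sup_right.mpr fun Q hQ => hdisj P hP Q (hsub hQ) ?_
    rintro rfl; exact hP' hQ
  have hTnot : T ∉ Φ \ Φ' := by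
    intro h
    rw [Finset.mem_sdiff] at h
    exact hTne.ne_empty (by simpa using disjoint_self.mp (hdisjT T h.1 h.2))
  have hΨsup : Ψ.sup id = Finset.univ := by
    rw [hΨ, Finset.sup_union, Finset.sup_singleton, id_eq, hT, ← Finset.sup_union,
      Finset.sdiff_union_of_subset hsub, hsup]
  have hΨpart : IsPartition Ψ := by
    refine ⟨?_, ?_, hΨsup⟩
    · intro P hP
      rcases Finset.mem_union.mp hP with h | h
      · exact hne1 P (Finset.mem_sdiff.mp h).1
      · rw [Finset.mem_singleton.mp h]; exact hTne
    · intro P hP Q hQ hPQ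
      rcases Finset.mem_union.mp hP with h1 | h1 <;>
        rcases Finset.mem_union.mp hQ with h2 | h2
      · exact hdisj P (Finset.mem_sdiff.mp h1).1 Q (Finset.mem_sdiff.mp h2).1 hPQ
      · rw [Finset.mem_singleton.mp h2]
        exact hdisjT P (Finset.mem_sdiff.mp h1).1 (Finset.mem_sdiff.mp h1).2
      · rw [Finset.mem_singleton.mp h1]
        exact (hdisjT Q (Finset.mem_sdiff.mp h2).1 (Finset.mem_sdiff.mp h2).2).symm
      · exact absurd ((Finset.mem_singleton.mp h1).trans
          (Finset.mem_singleton.mp h2).symm) hPQ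
  have hcard : Ψ.card = Φ.card - Φ'.card + 1 := by
    rw [hΨ, Finset.card_union_of_disjoint (Finset.disjoint_singleton_right.mpr hTnot),
      Finset.card_sdiff_of_subset hsub, Finset.card_singleton]
  have hkey : ∀ e ∈ E, (e ∈ delta edge E Φ ↔ (e ∈ delta edge E Ψ ∨ e ∈ delta edge E Φ'))
      ∧ ¬(e ∈ delta edge E Ψ ∧ e ∈ delta edge E Φ') := by
    intro e he
    set B := (Φ \ Φ').filter (fun P => (edge e ∩ P).Nonempty) with hB
    set A' := Φ'.filter (fun P => (edge e ∩ P).Nonempty) with hA'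
    have hAcard : (Φ.filter fun P => (edge e ∩ P).Nonempty).card = B.card + A'.card := by
      rw [← Finset.card_union_of_disjoint
        (Finset.disjoint_filter_filter (Finset.sdiff_disjoint)),
        ← Finset.filter_union, Finset.sdiff_union_of_subset hsub]
    have hmT : (edge e ∩ T).Nonempty ↔ A'.Nonempty := by
      constructor
      · rintro ⟨v, hv⟩
        rw [Finset.mem_inter, hT, Finset.mem_sup] at hv
        obtain ⟨hv1, Q, hQ, hv2⟩ := hv
        exact ⟨Q, Finset.mem_filter.mpr ⟨hQ, v, Finset.mem_inter.mpr ⟨hv1, hv2⟩⟩⟩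
      · rintro ⟨Q, hQ⟩
        rw [hA', Finset.mem_filter] at hQ
        obtain ⟨hQ1, v, hv⟩ := hQ
        rw [Finset.mem_inter] at hv
        exact ⟨v, Finset.mem_inter.mpr ⟨hv.1,
          Finset.mem_sup.mpr ⟨Q, hQ1, hv.2⟩⟩⟩
    have hΨcount : (Ψ.filter fun P => (edge e ∩ P).Nonempty).card
        = B.card + (if (edge e ∩ T).Nonempty then 1 else 0) := by
      rw [hΨ, Finset.filter_union, Finset.card_union_of_disjoint
        (Finset.disjoint_filter_filter (Finset.disjoint_singleton_right.mpr hTnot)),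
        Finset.filter_singleton]
      split <;> simp [hB]
    have hsubT : edge e ⊆ T ↔ B = ∅ := by
      constructor
      · intro h
        rw [hB, Finset.filter_eq_empty_iff]
        rintro P hP ⟨v, hv⟩
        rw [Finset.mem_inter] at hv
        rw [Finset.mem_sdiff] at hP
        exact Finset.disjoint_left.mp (hdisjT P hP.1 hP.2) hv.2 (h hv.1)
      · intro h v hv
        have hv' : v ∈ Φ.sup id := hsup ▸ Finset.mem_univ v
        rw [Finset.mem_sup] at hv'
        obtain ⟨P, hP, hvP⟩ := hv'
        by_cases hP' : P ∈ Φ'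
        · exact Finset.mem_sup.mpr ⟨P, hP', hvP⟩
        · have hPB : P ∈ B := Finset.mem_filter.mpr
            ⟨Finset.mem_sdiff.mpr ⟨hP, hP'⟩, v, Finset.mem_inter.mpr ⟨hv, hvP⟩⟩
          rw [h] at hPB
          exact absurd hPB (Finset.notMem_empty P)
    have hmΦ : e ∈ delta edge E Φ ↔ 2 ≤ B.card + A'.card := by
      simp only [delta, Finset.mem_filter, hsup, Finset.subset_univ, true_and, he, hAcard]
    have hmΨ : e ∈ delta edge E Ψ ↔
        2 ≤ B.card + (if (edge e ∩ T).Nonempty then 1 else 0) := by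
      simp only [delta, Finset.mem_filter, hΨsup, Finset.subset_univ, true_and, he, hΨcount]
    have hmΦ' : e ∈ delta edge E Φ' ↔ edge e ⊆ T ∧ 2 ≤ A'.card := by
      simp only [delta, Finset.mem_filter, he, true_and, ← hT, ← hA']
    rw [hmΦ, hmΨ, hmΦ']
    have hA'pos : (edge e ∩ T).Nonempty ↔ 1 ≤ A'.card := by
      rw [hmT, ← Finset.card_pos]; omega
    have hBzero : edge e ⊆ T ↔ B.card = 0 := by
      rw [hsubT, Finset.card_eq_zero]
    by_cases hmt : (edge e ∩ T).Nonempty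
    · have h1 : 1 ≤ A'.card := hA'pos.mp hmt
      simp only [hmt, if_pos]
      constructor
      · constructor
        · intro h
          by_cases hb : B.card = 0
          · exact Or.inr ⟨hBzero.mpr hb, by omega⟩
          · exact Or.inl (by omega)
        · rintro (h | ⟨h, h2⟩)
          · omega
          · omega
      · rintro ⟨h1', h2, h3⟩
        have := hBzero.mp h2
        omega
    · have h0 : A'.card = 0 := by
        by_contra h
        exact hmt (hA'pos.mpr (by omega))
      simp only [hmt, if_neg, not_false_iff]
      constructor
      · constructor
        · intro h; exact Or.inl (by omega)
        · rintro (h | ⟨h, h2⟩)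
          · omega
          · omega
      · rintro ⟨h1', h2, h3⟩
        omega
  have hdelta : delta edge E Φ = delta edge E Ψ ∪ delta edge E Φ' := by
    ext e
    by_cases he : e ∈ E
    · rw [Finset.mem_union]; exact (hkey e he).1
    · simp [delta, he]
  have hdisjd : Disjoint (delta edge E Ψ) (delta edge E Φ') := by
    rw [Finset.disjoint_left]
    intro e h1 h2
    have he : e ∈ E := (Finset.mem_filter.mp h1).1
    exact (hkey e he).2 ⟨h1, h2⟩
  have hsum : ∑ e ∈ delta edge E Φ, x e
      = ∑ e ∈ delta edge E Ψ, x e + ∑ e ∈ delta edge E Φ', x e := by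
    rw [hdelta, Finset.sum_union hdisjd]
  have hmin' := hmin Ψ hΨpart
  have hle : Φ'.card ≤ Φ.card := Finset.card_le_card hsub
  have hcardR : (Ψ.card : ℝ) = (Φ.card : ℝ) - (Φ'.card : ℝ) + 1 := by
    rw [hcard, Nat.cast_add, Nat.cast_sub hle, Nat.cast_one]
  rw [hsum, hcardR] at hmin'
  have expand : β * ((Φ.card : ℝ) - (Φ'.card : ℝ) + 1 - 1)
      = β * ((Φ.card : ℝ) - 1) - β * ((Φ'.card : ℝ) - 1) := by ring
  rw [expand] at hmin'
  linarith
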